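/- Let 0 < p < 1, λ > 0, y > 0, and define the generalized soft-thresholding operator T(y) which equals 0 if y ≤ τ (with τ = (2λ(1-p))^{1/(2-p)} + λp(2λ(1-p))^{(p-1)/(2-p)}) and otherwise equals the unique solution x > (2λ(1-p))^{1/(2-p)} of x + λp x^{p-1} = y. Then T is monotone nondecreasing: y₁ ≤ y₂ implies T(y₁) ≤ T(y₂). -/

import Mathlib

lemma gst_aux (p l : ℝ) (hp : 0 < p) (hp1 : p < 1) (hl : 0 < l) :
    StrictMonoOn (fun x : ℝ => x + l * p * x ^ (p - 1))
      (Set.Ioi ((2 * l * (1 - p)) ^ ((1 : ℝ) / (2 - p)))) := by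
  set a : ℝ := (2 * l * (1 - p)) ^ ((1 : ℝ) / (2 - p)) with ha
  have hz : (0 : ℝ) < 2 * l * (1 - p) := by nlinarith
  have hapos : 0 < a := Real.rpow_pos_of_pos hz _
  have h2p : (0 : ℝ) < 2 - p := by linarith
  have haexp : a ^ (2 - p) = 2 * l * (1 - p) := by
    rw [ha, ← Real.rpow_mul hz.le, one_div,
      inv_mul_cancel₀ (by linarith : (2:ℝ) - p ≠ 0), Real.rpow_one]
  have hderiv : ∀ x ∈ Set.Ioi a, HasDerivAt (fun x : ℝ => x + l * p * x ^ (p - 1))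
      (1 + l * p * ((p - 1) * x ^ (p - 2))) x := by
    intro x hx
    have hx0 : 0 < x := lt_trans hapos hx
    have h1 := (Real.hasDerivAt_rpow_const (p := p - 1) (Or.inl hx0.ne')).const_mul (l * p)
    have := (hasDerivAt_id x).add h1
    simpa [Pi.add_def, mul_assoc, show p - 1 - 1 = p - 2 by ring] using this
  apply strictMonoOn_of_deriv_pos (convex_Ioi a)
  · exact ContinuousOn.add continuousOn_id (ContinuousOn.const_smul
      (fun x hx => (Real.continuousAt_rpow_const x (p-1)
        (Or.inl (ne_of_gt (lt_trans hapos hx)))).continuousWithinAt) (l * p))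
  · intro x hx
    rw [interior_Ioi] at hx
    rw [(hderiv x hx).deriv]
    have hx0 : 0 < x := lt_trans hapos hx
    have hu : 0 < x ^ (p - 2) := Real.rpow_pos_of_pos hx0 _
    have huv : x ^ (p - 2) * x ^ (2 - p) = 1 := by
      rw [← Real.rpow_add hx0]; norm_num
    have hv : 2 * l * (1 - p) < x ^ (2 - p) := by
      rw [← haexp]; exact Real.rpow_lt_rpow hapos.le hx h2p
    nlinarith [mul_lt_mul_of_pos_left hv hu]

open Classical in
/-- Monotonicity of the generalized soft-thresholding operator: with
`τ = (2λ(1-p))^(1/(2-p)) + λ p (2λ(1-p))^((p-1)/(2-p))`, if `t₁ = T(y₁)` and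
`t₂ = T(y₂)` (where `T y = 0` for `y ≤ τ`, and otherwise `T y` is the solution
`x > (2λ(1-p))^(1/(2-p))` of `x + λ p x^(p-1) = y`), then `y₁ ≤ y₂ → t₁ ≤ t₂`. -/
theorem stmt_4 (p l y₁ y₂ t₁ t₂ : ℝ) (hp : 0 < p) (hp1 : p < 1) (hl : 0 < l)
    (hy₁ : 0 < y₁) (hy₂ : 0 < y₂) (hy : y₁ ≤ y₂)
    (ht₁ : if y₁ ≤ (2 * l * (1 - p)) ^ ((1 : ℝ) / (2 - p)) +
        l * p * (2 * l * (1 - p)) ^ ((p - 1) / (2 - p)) then t₁ = 0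
      else (2 * l * (1 - p)) ^ ((1 : ℝ) / (2 - p)) < t₁ ∧
        t₁ + l * p * t₁ ^ (p - 1) = y₁)
    (ht₂ : if y₂ ≤ (2 * l * (1 - p)) ^ ((1 : ℝ) / (2 - p)) +
        l * p * (2 * l * (1 - p)) ^ ((p - 1) / (2 - p)) then t₂ = 0
      else (2 * l * (1 - p)) ^ ((1 : ℝ) / (2 - p)) < t₂ ∧
        t₂ + l * p * t₂ ^ (p - 1) = y₂) :
    t₁ ≤ t₂ := by
  have hz : (0 : ℝ) < 2 * l * (1 - p) := by nlinarith
  have hapos : 0 < (2 * l * (1 - p)) ^ ((1 : ℝ) / (2 - p)) := Real.rpow_pos_of_pos hz _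
  split_ifs at ht₁ ht₂ with h1 h2 h2
  · simp [ht₁, ht₂]
  · rw [ht₁]; exact le_of_lt (lt_trans hapos ht₂.1)
  · exact absurd (le_trans hy h2) h1
  · by_contra hc
    push_neg at hc
    have := gst_aux p l hp hp1 hl (Set.mem_Ioi.mpr ht₂.1)
      (Set.mem_Ioi.mpr ht₁.1) hc
    simp only [ht₁.2, ht₂.2] at this
    linarith
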